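/- Let n ∈ ℕ, let a be an n×n complex matrix, and let k ≥ 1 be a natural number. Let M be the 2n×2n block matrix fromBlocks(|a*|, a, aᴴ, |a|), where |a| = √(aᴴ a) and |a*| = √(a aᴴ). Then trace(M^k) = 2^{k-1} · (trace(|a*|^k) + trace(|a|^k)) = 2^k · trace(|a|^k). -/

import Mathlib

/-- The positive semidefinite square root of a positive semidefinite matrix, as
`Matrix.PosSemidef.sqrt` was defined in Mathlib (December 2024); it has since been removed. -/
noncomputable def Matrix.PosSemidef.sqrt {n 𝕜 : Type*} [Fintype n] [DecidableEq n] [RCLike 𝕜]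
    [PartialOrder 𝕜]
    {A : Matrix n n 𝕜} (hA : A.PosSemidef) : Matrix n n 𝕜 :=
  (hA.isHermitian.eigenvectorUnitary : Matrix n n 𝕜) *
    Matrix.diagonal ((↑) ∘ Real.sqrt ∘ hA.isHermitian.eigenvalues) *
    (star hA.isHermitian.eigenvectorUnitary : Matrix n n 𝕜)

open Matrix ComplexOrder in
open scoped MatrixOrder in
lemma sqrt_eq_cfcSqrt {m : Type*} [Fintype m] [DecidableEq m] {A : Matrix m m ℂ}
    (hA : A.PosSemidef) : hA.sqrt = CFC.sqrt A := by
  rw [CFC.sqrt_eq_cfc, cfc_nnreal_eq_real _ A, hA.1.cfc_eq, IsHermitian.cfc,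
    Unitary.conjStarAlgAut_apply, Matrix.PosSemidef.sqrt]
  congr 3
  funext i
  simp [Real.coe_toNNReal', max_eq_left (hA.eigenvalues_nonneg i)]

open Matrix ComplexOrder in
open scoped MatrixOrder in
lemma Matrix.PosSemidef.posSemidef_sqrt {m : Type*} [Fintype m] [DecidableEq m]
    {A : Matrix m m ℂ} (hA : A.PosSemidef) : hA.sqrt.PosSemidef := by
  rw [sqrt_eq_cfcSqrt]; exact (CFC.sqrt_nonneg A).posSemidef

open Matrix ComplexOrder in
open scoped MatrixOrder in
lemma Matrix.PosSemidef.sqrt_mul_self {m : Type*} [Fintype m] [DecidableEq m]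
    {A : Matrix m m ℂ} (hA : A.PosSemidef) : hA.sqrt * hA.sqrt = A := by
  rw [sqrt_eq_cfcSqrt]; exact CFC.sqrt_mul_sqrt_self A (ha := hA.nonneg)

open Matrix ComplexOrder in
open scoped MatrixOrder in
lemma Matrix.PosSemidef.eq_sqrt_of_sq_eq {m : Type*} [Fintype m] [DecidableEq m]
    {A B : Matrix m m ℂ} (hB : B.PosSemidef) (hA : A.PosSemidef)
    (h : B ^ 2 = A) : B = hA.sqrt := by
  rw [sqrt_eq_cfcSqrt]
  exact (CFC.sqrt_unique (a := A) (b := B) (by rw [← h, sq]) hB.nonneg).symm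

open Matrix Polynomial

section Aux

open Matrix Polynomial

variable {m : Type*} [Fintype m] [DecidableEq m]

lemma conjPow (U b : Matrix m m ℂ) (hU : U * Uᴴ = 1) (hU' : Uᴴ * U = 1) (j : ℕ) :
    (U * b * Uᴴ) ^ j = U * b ^ j * Uᴴ := by
  induction j with
  | zero => simp [hU]
  | succ j ih =>
    rw [pow_succ, ih, pow_succ]
    calc U * b ^ j * Uᴴ * (U * b * Uᴴ) = U * b ^ j * (Uᴴ * U) * b * Uᴴ := by
          simp only [Matrix.mul_assoc]
      _ = U * (b ^ j * b) * Uᴴ := by rw [hU']; simp only [Matrix.mul_assoc, Matrix.mul_one]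
      _ = _ := by simp only [Matrix.mul_assoc]

lemma aeval_conj (U b : Matrix m m ℂ) (hU : U * Uᴴ = 1) (hU' : Uᴴ * U = 1) (P : ℂ[X]) :
    aeval (U * b * Uᴴ) P = U * aeval b P * Uᴴ := by
  induction P using Polynomial.induction_on' with
  | add p q hp hq => rw [map_add, map_add, hp, hq, Matrix.mul_add, Matrix.add_mul]
  | monomial j c =>
    rw [aeval_monomial, aeval_monomial, conjPow U b hU hU' j]
    have hc : (algebraMap ℂ (Matrix m m ℂ)) c * U = U * (algebraMap ℂ (Matrix m m ℂ)) c :=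
      Algebra.commutes c U
    calc (algebraMap ℂ _) c * (U * b ^ j * Uᴴ)
        = ((algebraMap ℂ _) c * U) * b ^ j * Uᴴ := by simp only [Matrix.mul_assoc]
      _ = U * ((algebraMap ℂ _) c * b ^ j) * Uᴴ := by rw [hc]; simp only [Matrix.mul_assoc]

lemma aeval_diag (d : m → ℂ) (P : ℂ[X]) :
    aeval (Matrix.diagonal d) P = Matrix.diagonal (fun i => P.eval (d i)) := by
  induction P using Polynomial.induction_on' with
  | add p q hp hq =>
    rw [map_add, hp, hq, diagonal_add]
    simp only [eval_add]
  | monomial j c =>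
    simp [aeval_monomial, algebraMap_eq_diagonal, diagonal_pow, diagonal_mul_diagonal]

open ComplexOrder in
lemma sqrt_eq_aeval {A : Matrix m m ℂ} (hA : A.PosSemidef) (Q : ℂ[X])
    (h : ∀ i, Q.eval ((hA.1.eigenvalues i : ℝ) : ℂ) = ((Real.sqrt (hA.1.eigenvalues i) : ℝ) : ℂ)) :
    aeval A Q = hA.sqrt := by
  set U : Matrix m m ℂ := (hA.1.eigenvectorUnitary : Matrix m m ℂ) with hUdef
  have hU : U * Uᴴ = 1 := by
    rw [← Matrix.star_eq_conjTranspose]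
    exact (Matrix.mem_unitaryGroup_iff).mp hA.1.eigenvectorUnitary.2
  have hU' : Uᴴ * U = 1 := by
    rw [← Matrix.star_eq_conjTranspose]
    exact (Matrix.mem_unitaryGroup_iff').mp hA.1.eigenvectorUnitary.2
  have hspec : A = U * Matrix.diagonal (RCLike.ofReal ∘ hA.1.eigenvalues) * Uᴴ := by
    rw [← Matrix.star_eq_conjTranspose]
    exact hA.1.spectral_theorem.trans (Unitary.conjStarAlgAut_apply _ _)
  have key : aeval A Q = U * Matrix.diagonal (fun i => ((Real.sqrt (hA.1.eigenvalues i) : ℝ) : ℂ)) * Uᴴ := by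
    conv_lhs => rw [hspec]
    rw [aeval_conj U _ hU hU' Q, aeval_diag,
      show (fun i => Q.eval ((RCLike.ofReal ∘ hA.1.eigenvalues) i))
          = (fun i => ((Real.sqrt (hA.1.eigenvalues i) : ℝ) : ℂ)) from funext fun i => h i]
  have hPSD : (aeval A Q).PosSemidef := by
    rw [key]
    exact PosSemidef.mul_mul_conjTranspose_same
      (posSemidef_diagonal_iff.mpr fun i => by
        rw [Complex.zero_le_real]
        exact Real.sqrt_nonneg _) U
  refine hPSD.eq_sqrt_of_sq_eq hA ?_
  have hfun : (fun i => ((Real.sqrt (hA.1.eigenvalues i) : ℝ) : ℂ)) ^ 2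
      = RCLike.ofReal ∘ hA.1.eigenvalues := funext fun i => by
    simp only [Pi.pow_apply, pow_two, ← Complex.ofReal_mul,
      Real.mul_self_sqrt (hA.eigenvalues_nonneg i), Function.comp_apply]
    rfl
  rw [key, conjPow U _ hU hU', diagonal_pow, hfun, ← hspec]

variable {N : Type*} [Fintype N] [DecidableEq N]

lemma pow_intertwine (a : Matrix N N ℂ) (j : ℕ) :
    a * (aᴴ * a) ^ j = (a * aᴴ) ^ j * a := by
  induction j with
  | zero => simp
  | succ j ih =>
    rw [pow_succ, ← Matrix.mul_assoc, ih, pow_succ]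
    simp only [Matrix.mul_assoc]

lemma aeval_intertwine (a : Matrix N N ℂ) (Q : ℂ[X]) :
    a * aeval (aᴴ * a) Q = aeval (a * aᴴ) Q * a := by
  induction Q using Polynomial.induction_on' with
  | add p q hp hq => rw [map_add, map_add, Matrix.mul_add, Matrix.add_mul, hp, hq]
  | monomial j c =>
    simp only [aeval_monomial, Algebra.algebraMap_eq_smul_one, smul_mul_assoc, one_mul,
      mul_smul_comm, pow_intertwine]

lemma trace_pow_comm (a : Matrix N N ℂ) (j : ℕ) :
    ((a * aᴴ) ^ j).trace = ((aᴴ * a) ^ j).trace := by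
  cases j with
  | zero => simp
  | succ j =>
    calc ((a * aᴴ) ^ (j + 1)).trace = (((a * aᴴ) ^ j * a) * aᴴ).trace := by
          rw [pow_succ, Matrix.mul_assoc]
      _ = (aᴴ * ((a * aᴴ) ^ j * a)).trace := trace_mul_comm _ _
      _ = (aᴴ * (a * (aᴴ * a) ^ j)).trace := by rw [pow_intertwine]
      _ = ((aᴴ * a) ^ (j + 1)).trace := by
          rw [pow_succ']
          simp only [Matrix.mul_assoc]

lemma trace_aeval_comm (a : Matrix N N ℂ) (Q : ℂ[X]) :
    (aeval (a * aᴴ) Q).trace = (aeval (aᴴ * a) Q).trace := by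
  induction Q using Polynomial.induction_on' with
  | add p q hp hq => rw [map_add, map_add, trace_add, trace_add, hp, hq]
  | monomial j c =>
    simp only [aeval_monomial, Algebra.algebraMap_eq_smul_one, smul_mul_assoc, one_mul,
      trace_smul, trace_pow_comm]

open ComplexOrder in
lemma sqrt_stuff (a : Matrix N N ℂ) :
    (posSemidef_self_mul_conjTranspose a).sqrt * a
        = a * (posSemidef_conjTranspose_mul_self a).sqrt ∧
      ∀ k : ℕ, ((posSemidef_self_mul_conjTranspose a).sqrt ^ k).trace
        = ((posSemidef_conjTranspose_mul_self a).sqrt ^ k).trace := by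
  set ht := posSemidef_self_mul_conjTranspose a with htdef
  set hs := posSemidef_conjTranspose_mul_self a with hsdef
  set S : Finset ℝ := Finset.univ.image ht.1.eigenvalues ∪ Finset.univ.image hs.1.eigenvalues
    with hSdef
  set P₀ : ℝ[X] := Lagrange.interpolate S id (fun x => Real.sqrt x) with hPdef
  have hnode : ∀ x ∈ S, P₀.eval x = Real.sqrt x := fun x hx => by
    simpa [hPdef] using Lagrange.eval_interpolate_at_node (fun y => Real.sqrt y)
      (Set.injOn_id _) hx
  set Q : ℂ[X] := P₀.map (algebraMap ℝ ℂ) with hQdef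
  have hQ : ∀ x ∈ S, Q.eval ((x : ℝ) : ℂ) = ((Real.sqrt x : ℝ) : ℂ) := by
    intro x hx
    rw [hQdef, eval_map, show ((x : ℝ) : ℂ) = algebraMap ℝ ℂ x from rfl,
      eval₂_at_apply, hnode x hx]
    rfl
  have h1 : aeval (a * aᴴ) Q = ht.sqrt :=
    sqrt_eq_aeval ht Q fun i => hQ _ (Finset.mem_union_left _
      (Finset.mem_image_of_mem _ (Finset.mem_univ i)))
  have h2 : aeval (aᴴ * a) Q = hs.sqrt :=
    sqrt_eq_aeval hs Q fun i => hQ _ (Finset.mem_union_right _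
      (Finset.mem_image_of_mem _ (Finset.mem_univ i)))
  constructor
  · rw [← h1, ← h2, aeval_intertwine]
  · intro k
    rw [← h1, ← h2, ← map_pow, ← map_pow, trace_aeval_comm]

omit [DecidableEq N] in
lemma trace_fromBlocks' (A B C D : Matrix N N ℂ) :
    (fromBlocks A B C D).trace = A.trace + D.trace := by
  simp [Matrix.trace, Fintype.sum_sum_type, Matrix.diag]

lemma blockPow (a t s : Matrix N N ℂ) (h1 : t * a = a * s) (h2 : aᴴ * t = s * aᴴ)
    (h3 : t * t = a * aᴴ) (h4 : s * s = aᴴ * a) :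
    ∀ k, 1 ≤ k → (fromBlocks t a aᴴ s) ^ k
      = (2 ^ (k - 1) : ℂ) • fromBlocks (t ^ k) (t ^ (k - 1) * a) (s ^ (k - 1) * aᴴ) (s ^ k) := by
  intro k hk
  induction k, hk using Nat.le_induction with
  | base => simp
  | succ k hk ih =>
    have hk1 : k - 1 + 1 = k := Nat.succ_pred_eq_of_pos hk
    rw [pow_succ, ih, Matrix.smul_mul, fromBlocks_multiply]
    have e1 : t ^ k * t + t ^ (k-1) * a * aᴴ = (2:ℂ) • t ^ (k+1) := by
      rw [Matrix.mul_assoc, ← h3, ← Matrix.mul_assoc, ← pow_succ, ← pow_succ, hk1, ← pow_succ, two_smul]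
    have e2 : t ^ k * a + t ^ (k-1) * a * s = (2:ℂ) • (t ^ k * a) := by
      rw [Matrix.mul_assoc, ← h1, ← Matrix.mul_assoc, ← pow_succ, hk1, two_smul]
    have e3 : s ^ (k-1) * aᴴ * t + s ^ k * aᴴ = (2:ℂ) • (s ^ k * aᴴ) := by
      rw [Matrix.mul_assoc, h2, ← Matrix.mul_assoc, ← pow_succ, hk1, two_smul]
    have e4 : s ^ (k-1) * aᴴ * a + s ^ k * s = (2:ℂ) • s ^ (k+1) := by
      rw [Matrix.mul_assoc, ← h4, ← Matrix.mul_assoc, ← pow_succ, ← pow_succ, hk1, ← pow_succ, two_smul]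
    rw [e1, e2, e3, e4, show k + 1 - 1 = k from rfl, ← fromBlocks_smul, smul_smul,
      ← pow_succ, hk1]

end Aux


open Matrix ComplexOrder in
/-- Let `a` be an `n × n` complex matrix, `k ≥ 1`, and let `M` be the
`2n × 2n` block matrix `fromBlocks |a*| a aᴴ |a|`, where `|a| = √(aᴴ a)` and
`|a*| = √(a aᴴ)`. Then `trace (M^k) = 2^(k-1) · (trace (|a*|^k) + trace (|a|^k))
= 2^k · trace (|a|^k)`. -/
theorem stmt8 (n : ℕ) (a : Matrix (Fin n) (Fin n) ℂ) (k : ℕ) (hk : 1 ≤ k) :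
    ((fromBlocks (posSemidef_self_mul_conjTranspose a).sqrt a
        aᴴ (posSemidef_conjTranspose_mul_self a).sqrt) ^ k).trace
      = 2 ^ (k - 1) * (((posSemidef_self_mul_conjTranspose a).sqrt ^ k).trace
          + ((posSemidef_conjTranspose_mul_self a).sqrt ^ k).trace) ∧
    ((fromBlocks (posSemidef_self_mul_conjTranspose a).sqrt a
        aᴴ (posSemidef_conjTranspose_mul_self a).sqrt) ^ k).trace
      = 2 ^ k * ((posSemidef_conjTranspose_mul_self a).sqrt ^ k).trace := by
  obtain ⟨h1, htr⟩ := sqrt_stuff a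
  set ht := posSemidef_self_mul_conjTranspose a
  set hs := posSemidef_conjTranspose_mul_self a
  set t := ht.sqrt with htd
  set s := hs.sqrt with hsd
  have hth : tᴴ = t := ht.posSemidef_sqrt.isHermitian
  have hsh : sᴴ = s := hs.posSemidef_sqrt.isHermitian
  have h2 : aᴴ * t = s * aᴴ := by
    have := congrArg conjTranspose h1
    simpa [conjTranspose_mul, hth, hsh] using this
  have h3 : t * t = a * aᴴ := ht.sqrt_mul_self
  have h4 : s * s = aᴴ * a := hs.sqrt_mul_self
  have key := blockPow a t s h1 h2 h3 h4 k hk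
  have h2k : (2:ℂ) ^ (k - 1) * 2 = 2 ^ k := by
    rw [← pow_succ]
    congr 1
    omega
  constructor
  · rw [key, trace_smul, trace_fromBlocks', smul_eq_mul]
  · rw [key, trace_smul, trace_fromBlocks', smul_eq_mul, htr k, ← h2k]
    ring
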